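/- Let v be a weight on G such that the closure of G \ E_v is a compact subset of G and inf_{z∈K} v(z) > 0 for each compact set K ⊆ G \ cl(G \ E_v). Then H^∞_v(G) is a Banach space. -/

import Mathlib

open Complex Metric Set Filter Topology MeasureTheory

noncomputable section

/-- `f` is holomorphic on `G` and `sup_{z in G} v z * |f z| < ∞`. -/
def MemHv (G : Set ℂ) (v : ℂ → ℝ) (f : ℂ → ℂ) : Prop :=
  DifferentiableOn ℂ f G ∧ ∃ C : ℝ, ∀ z ∈ G, v z * ‖f z‖ ≤ C

/-- The weighted sup-seminorm `‖f‖_v`. -/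
def HvNorm (G : Set ℂ) (v : ℂ → ℝ) (f : ℂ → ℂ) : ℝ :=
  sSup ((fun z => v z * ‖f z‖) '' G)

/-- A `‖·‖_v`-Cauchy sequence. -/
def HvCauchy (G : Set ℂ) (v : ℂ → ℝ) (F : ℕ → ℂ → ℂ) : Prop :=
  ∀ ε : ℝ, 0 < ε → ∃ N : ℕ, ∀ m ≥ N, ∀ n ≥ N, ∀ z ∈ G,
    v z * ‖F m z - F n z‖ ≤ ε

/-- Convergence in the `‖·‖_v`-seminorm. -/
def HvTendsto (G : Set ℂ) (v : ℂ → ℝ) (F : ℕ → ℂ → ℂ) (f : ℂ → ℂ) : Prop :=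
  ∀ ε : ℝ, 0 < ε → ∃ N : ℕ, ∀ n ≥ N, ∀ z ∈ G,
    v z * ‖F n z - f z‖ ≤ ε

/-- Completeness of `H^∞_v(G)`: every Cauchy sequence converges in the space. -/
def HvComplete (G : Set ℂ) (v : ℂ → ℝ) : Prop :=
  ∀ F : ℕ → ℂ → ℂ, (∀ n, MemHv G v (F n)) → HvCauchy G v F →
    ∃ f : ℂ → ℂ, MemHv G v f ∧ HvTendsto G v F f

/-- The seminorm `‖·‖_v` is a norm: `‖f‖_v = 0` forces `f = 0` on `G`. -/
def HvNormed (G : Set ℂ) (v : ℂ → ℝ) : Prop :=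
  ∀ f : ℂ → ℂ, MemHv G v f → (∀ z ∈ G, v z * ‖f z‖ = 0) →
    ∀ z ∈ G, f z = 0

/-- `H^∞_v(G)` is a Banach space. -/
def IsBanachHv (G : Set ℂ) (v : ℂ → ℝ) : Prop :=
  HvNormed G v ∧ HvComplete G v

theorem stmt15 (G : Set ℂ) (v : ℂ → ℝ) (hG : IsOpen G) (hGc : IsConnected G)
    (hv : ∀ z ∈ G, 0 ≤ v z)
    (hcomp : IsCompact (closure (G \ {w ∈ G | 0 < v w})))
    (hsub : closure (G \ {w ∈ G | 0 < v w}) ⊆ G)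
    (hinf : ∀ K ⊆ G \ closure (G \ {w ∈ G | 0 < v w}), IsCompact K →
      ∃ c > (0:ℝ), ∀ z ∈ K, c ≤ v z) :
    IsBanachHv G v := by
  set A : Set ℂ := closure (G \ {w ∈ G | 0 < v w}) with hA
  have hGA_open : IsOpen (G \ A) := hG.sdiff isClosed_closure
  have hGA_ne : (G \ A).Nonempty := by
    by_contra h
    rw [Set.not_nonempty_iff_eq_empty, Set.diff_eq_empty] at h
    have hGeq : G = A := Set.Subset.antisymm h hsub
    have hGcl : IsClopen G := ⟨hGeq ▸ hcomp.isClosed, hG⟩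
    have huniv : G = Set.univ := hGcl.eq_univ hGc.nonempty
    exact (huniv ▸ hGeq ▸ hcomp).ne_univ rfl
  have hpos : ∀ z ∈ G \ A, 0 < v z := by
    intro z hz
    obtain ⟨c, hc, hcz⟩ := hinf {z} (Set.singleton_subset_iff.mpr hz) isCompact_singleton
    exact lt_of_lt_of_le hc (hcz z rfl)
  constructor
  · -- Normed
    intro f hf hzero z hzG
    have hfa : AnalyticOnNhd ℂ f G := hf.1.analyticOnNhd hG
    obtain ⟨z₀, hz₀⟩ := hGA_ne
    have hev : f =ᶠ[𝓝 z₀] 0 := by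
      filter_upwards [hGA_open.mem_nhds hz₀] with w hw
      have h0 := hzero w hw.1
      have hvw := hpos w hw
      have habs : ‖f w‖ = 0 := by
        rcases mul_eq_zero.mp h0 with h | h
        · exact absurd h (ne_of_gt hvw)
        · exact h
      simpa using habs
    exact hfa.eqOn_zero_of_preconnected_of_eventuallyEq_zero hGc.isPreconnected hz₀.1 hev hzG
  · -- Complete
    intro F hF hC
    obtain ⟨L, hL, hAL, hLG⟩ := exists_compact_between hcomp hG hsub
    set U : Set ℂ := interior L with hU
    have hUopen : IsOpen U := isOpen_interior
    have hUG : closure U ⊆ G := (closure_minimal interior_subset hL.isClosed).trans hLG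
    have hUb : Bornology.IsBounded U := hL.isBounded.subset interior_subset
    have hfr : frontier U ⊆ G \ A := by
      intro z hz
      refine ⟨hUG (frontier_subset_closure hz), fun hzA => ?_⟩
      exact (disjoint_frontier_iff_isOpen.mpr hUopen).le_bot ⟨hz, hAL hzA⟩
    have hfrK : IsCompact (frontier U) :=
      hL.of_isClosed_subset isClosed_frontier
        ((frontier_subset_closure).trans (closure_minimal interior_subset hL.isClosed))
    -- key uniform Cauchy estimate on compact subsets of G
    have key : ∀ K, K ⊆ G → IsCompact K → ∀ ε, 0 < ε → ∃ N, ∀ m ≥ N, ∀ n ≥ N, ∀ z ∈ K,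
        ‖F m z - F n z‖ ≤ ε := by
      intro K hKG hK ε hε
      have hK' : IsCompact (K \ U) := hK.diff hUopen
      have hsubs : (K \ U) ∪ frontier U ⊆ G \ A := by
        apply Set.union_subset _ hfr
        intro z hz
        exact ⟨hKG hz.1, fun hzA => hz.2 (hAL hzA)⟩
      obtain ⟨c, hc, hcv⟩ := hinf _ hsubs (hK'.union hfrK)
      obtain ⟨N, hN⟩ := hC (c * ε) (mul_pos hc hε)
      refine ⟨N, fun m hm n hn z hz => ?_⟩
      have hbound : ∀ w ∈ (K \ U) ∪ frontier U, ‖F m w - F n w‖ ≤ ε := by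
        intro w hw
        have h1 := hN m hm n hn w (hsubs hw).1
        have h2 := hcv w hw
        have h3 : c * ‖F m w - F n w‖ ≤ c * ε :=
          le_trans (mul_le_mul_of_nonneg_right h2 (norm_nonneg _)) h1
        exact le_of_mul_le_mul_left h3 hc
      by_cases hzU : z ∈ U
      · have hd : DiffContOnCl ℂ (fun w => F m w - F n w) U :=
          DifferentiableOn.diffContOnCl (((hF m).1.sub (hF n).1).mono hUG)
        have hmax := Complex.norm_le_of_forall_mem_frontier_norm_le hUb hd
          (fun w hw => by simpa using hbound w (Or.inr hw)) (subset_closure hzU)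
        simpa using hmax
      · exact hbound z (Or.inl ⟨hz, hzU⟩)
    -- pointwise Cauchy, define the limit f
    have hptC : ∀ z ∈ G, CauchySeq (fun n => F n z) := by
      intro z hzG
      rw [Metric.cauchySeq_iff]
      intro ε hε
      obtain ⟨N, hN⟩ := key {z} (Set.singleton_subset_iff.mpr hzG) isCompact_singleton (ε / 2)
        (half_pos hε)
      refine ⟨N, fun m hm n hn => ?_⟩
      have := hN m hm n hn z rfl
      calc dist (F m z) (F n z) = ‖F m z - F n z‖ := dist_eq_norm _ _
        _ ≤ ε / 2 := this
        _ < ε := half_lt_self hε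
    set f : ℂ → ℂ := fun z => limUnder atTop (fun n => F n z) with hf
    have hfl : ∀ z ∈ G, Tendsto (fun n => F n z) atTop (𝓝 (f z)) := fun z hz =>
      (hptC z hz).tendsto_limUnder
    -- locally uniform convergence
    have hlu : TendstoLocallyUniformlyOn F f atTop G := by
      rw [tendstoLocallyUniformlyOn_iff_forall_isCompact hG]
      intro K hKG hK
      have hucs : UniformCauchySeqOn F atTop K := by
        rw [Metric.uniformCauchySeqOn_iff]
        intro ε hε
        obtain ⟨N, hN⟩ := key K hKG hK (ε / 2) (half_pos hε)
        exact ⟨N, fun m hm n hn z hz =>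
          lt_of_le_of_lt ((dist_eq_norm _ _).trans_le (hN m hm n hn z hz)) (half_lt_self hε)⟩
      exact hucs.tendstoUniformlyOn_of_tendsto (fun z hz => hfl z (hKG hz))
    have hfd : DifferentiableOn ℂ f G :=
      hlu.differentiableOn (Eventually.of_forall fun n => (hF n).1) hG
    -- norm convergence
    have htend : HvTendsto G v F f := by
      intro ε hε
      obtain ⟨N, hN⟩ := hC (ε / 2) (half_pos hε)
      refine ⟨N, fun n hn z hzG => ?_⟩
      have hlim : Tendsto (fun m => v z * ‖F n z - F m z‖) atTop
          (𝓝 (v z * ‖F n z - f z‖)) := by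
        apply Tendsto.const_mul
        exact (continuous_norm.tendsto _).comp (tendsto_const_nhds.sub (hfl z hzG))
      have hle : ∀ᶠ m in atTop, v z * ‖F n z - F m z‖ ≤ ε / 2 := by
        filter_upwards [eventually_ge_atTop N] with m hm
        exact hN n hn m hm z hzG
      exact le_trans (le_of_tendsto hlim hle) (le_of_lt (half_lt_self hε))
    refine ⟨f, ⟨hfd, ?_⟩, htend⟩
    obtain ⟨N, hN⟩ := htend 1 one_pos
    obtain ⟨C₀, hC₀⟩ := (hF N).2
    refine ⟨C₀ + 1, fun z hzG => ?_⟩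
    have htri : ‖f z‖ ≤ ‖F N z‖ + ‖F N z - f z‖ := by
      have := norm_sub_le (F N z) (f z)
      calc ‖f z‖ = ‖F N z - (F N z - f z)‖ := by ring_nf
        _ ≤ ‖F N z‖ + ‖F N z - f z‖ := norm_sub_le _ _
    calc v z * ‖f z‖
        ≤ v z * (‖F N z‖ + ‖F N z - f z‖) :=
          mul_le_mul_of_nonneg_left htri (hv z hzG)
      _ = v z * ‖F N z‖ + v z * ‖F N z - f z‖ := by ring
      _ ≤ C₀ + 1 := add_le_add (hC₀ z hzG) (hN N le_rfl z hzG)
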